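/- Fix an integer m ≥ 2 and let p_n denote the n-th prime number. Then the sequence of ratios o(C_{p_n}^m)/o(C_{p_n}^{m-1}) converges to 1 as n → ∞; each ratio is strictly greater than 1. -/

import Mathlib

open Filter Topology

/-- The average order of the elements of a finite group `G`:
`o(G) = (1/|G|) * ∑_{x ∈ G} |x|`. -/
noncomputable def avgOrder (G : Type*) [Group G] : ℝ :=
  (∑ᶠ x : G, (orderOf x : ℝ)) / (Nat.card G)

lemma avg_formula (p k : ℕ) (hp : p.Prime) :
    avgOrder (Fin k → Multiplicative (ZMod p)) =
      (1 + ((p:ℝ)^k - 1) * p) / (p:ℝ)^k := by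
  classical
  haveI : Fact p.Prime := ⟨hp⟩
  set G := Fin k → Multiplicative (ZMod p) with hG
  have hcard : Nat.card G = p ^ k := by
    simp [hG, Nat.card_eq_fintype_card, ZMod.card]
  have horder : ∀ x : G, x ≠ 1 → orderOf x = p := by
    intro x hx
    apply orderOf_eq_prime _ hx
    funext i
    have h1 : (x i) ^ p = 1 := by
      have := pow_card_eq_one' (x := x i)
      simpa [Nat.card_eq_fintype_card, ZMod.card] using this
    exact h1
  have hsum : (∑ᶠ x : G, (orderOf x : ℝ)) = ((p:ℝ)^k - 1) * p + 1 := by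
    rw [finsum_eq_sum_of_fintype]
    rw [← Finset.sum_erase_add Finset.univ _ (Finset.mem_univ (1 : G))]
    have : ∑ x ∈ Finset.univ.erase (1 : G), (orderOf x : ℝ)
        = ∑ _x ∈ Finset.univ.erase (1 : G), (p : ℝ) := by
      refine Finset.sum_congr rfl ?_
      intro x hx
      rw [horder x (Finset.mem_erase.mp hx).1]
    rw [this, Finset.sum_const, Finset.card_erase_of_mem (Finset.mem_univ _)]
    have hc : Fintype.card G = p ^ k := by
      rw [← Nat.card_eq_fintype_card, hcard]
    rw [Finset.card_univ, hc]
    have h1 : 1 ≤ p ^ k := Nat.one_le_pow _ _ hp.pos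
    simp only [orderOf_one, Nat.cast_one, nsmul_eq_mul]
    push_cast [h1]
    ring
  rw [avgOrder, hsum, hcard]
  push_cast
  ring_nf


lemma ratio_bounds (p m : ℕ) (hp : p.Prime) (hm : 2 ≤ m) :
    1 < avgOrder (Fin m → Multiplicative (ZMod p)) /
        avgOrder (Fin (m - 1) → Multiplicative (ZMod p)) ∧
    avgOrder (Fin m → Multiplicative (ZMod p)) /
        avgOrder (Fin (m - 1) → Multiplicative (ZMod p)) ≤ 1 + (p : ℝ)⁻¹ := by
  obtain ⟨k, rfl⟩ : ∃ k, m = k + 1 + 1 := ⟨m - 2, by omega⟩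
  rw [avg_formula _ _ hp, avg_formula _ _ hp]
  have hk : k + 1 + 1 - 1 = k + 1 := rfl
  rw [hk]
  set P : ℝ := (p : ℝ) with hP
  have hP2 : (2 : ℝ) ≤ P := by rw [hP]; exact_mod_cast hp.two_le
  set Q : ℝ := P ^ k with hQ
  have hQ1 : (1:ℝ) ≤ Q := by rw [hQ, hP]; exact_mod_cast Nat.one_le_pow k p hp.pos
  have hpow1 : P ^ (k + 1) = Q * P := by rw [hQ, pow_succ]
  have hpow2 : P ^ (k + 1 + 1) = Q * P * P := by rw [pow_succ, hpow1]
  rw [hpow1, hpow2]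
  have hQP : (1:ℝ) ≤ Q * P := by nlinarith
  have hB : (0:ℝ) < 1 + (Q * P - 1) * P := by nlinarith
  have hA : (0:ℝ) < 1 + (Q * P * P - 1) * P := by nlinarith
  have hD : (0:ℝ) < Q * P * P * P - P * P + P := by nlinarith
  have hr : (1 + (Q * P * P - 1) * P) / (Q * P * P) / ((1 + (Q * P - 1) * P) / (Q * P))
      = (Q * P * P * P - P + 1) / (Q * P * P * P - P * P + P) := by
    have hPne : P ≠ 0 := by linarith
    have hQne : Q ≠ 0 := by linarith
    have hBne : 1 + (Q * P - 1) * P ≠ 0 := ne_of_gt hB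
    have hDne : Q * P * P * P - P * P + P ≠ 0 := ne_of_gt hD
    field_simp
    ring
  rw [hr]
  constructor
  · rw [lt_div_iff₀ hD]
    nlinarith [sq_nonneg (P - 1)]
  · have h1p : 1 + P⁻¹ = (P + 1) / P := by field_simp
    rw [h1p, div_le_div_iff₀ hD (by linarith : (0:ℝ) < P)]
    nlinarith [mul_nonneg (sub_nonneg.mpr hQ1) (by positivity : (0:ℝ) ≤ P * P * P)]

/-- For fixed `m ≥ 2`, the ratios `o(C_{p_n}^m)/o(C_{p_n}^{m-1})` tend to `1`
as `n → ∞`, and each ratio is strictly greater than `1`. -/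
theorem avgOrder_ratio_elemAbelian_tendsto_one (m : ℕ) (hm : 2 ≤ m) :
    Filter.Tendsto
      (fun n => avgOrder (Fin m → Multiplicative (ZMod (Nat.nth Nat.Prime n))) /
        avgOrder (Fin (m - 1) → Multiplicative (ZMod (Nat.nth Nat.Prime n))))
      Filter.atTop (nhds 1) ∧
    ∀ n, 1 < avgOrder (Fin m → Multiplicative (ZMod (Nat.nth Nat.Prime n))) /
      avgOrder (Fin (m - 1) → Multiplicative (ZMod (Nat.nth Nat.Prime n))) := by
  have hprime : ∀ n, (Nat.nth Nat.Prime n).Prime := Nat.prime_nth_prime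
  have hbounds := fun n => ratio_bounds (Nat.nth Nat.Prime n) m (hprime n) hm
  refine ⟨?_, fun n => (hbounds n).1⟩
  have hmono : StrictMono (Nat.nth Nat.Prime) := Nat.nth_strictMono Nat.infinite_setOf_prime
  have htop : Filter.Tendsto (fun n => ((Nat.nth Nat.Prime n : ℕ) : ℝ)) Filter.atTop Filter.atTop :=
    tendsto_natCast_atTop_atTop.comp hmono.tendsto_atTop
  have hupper : Filter.Tendsto (fun n => 1 + ((Nat.nth Nat.Prime n : ℕ) : ℝ)⁻¹)
      Filter.atTop (nhds 1) := by
    have := tendsto_const_nhds (x := (1:ℝ)) (f := Filter.atTop (α := ℕ)) |>.add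
      (tendsto_inv_atTop_zero.comp htop)
    simpa using this
  refine tendsto_of_tendsto_of_tendsto_of_le_of_le tendsto_const_nhds hupper
    (fun n => le_of_lt (hbounds n).1) (fun n => (hbounds n).2)
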